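/- Let f : S¹ → ℕ. Let v = ((m_1,r_1),…,(m_n,r_n)) and w = ((m_1',r_1'),…,(m_m',r_m')) be lists of disk data with all radii > 0 such that both {x ∈ S¹ : H_v(x) ≠ f(x)} and {x ∈ S¹ : H_w(x) ≠ f(x)} are finite. Suppose that H_w is properly upper semicontinuous, every boundary trace ∂h_{(m_i',r_i')} has exactly 0 or exactly 2 elements, the number of indices i with S¹ ⊆ {y : ‖y − m_i'‖ ≤ r_i'} equals the number of indices j with S¹ ⊆ {y : ‖y − m_j‖ ≤ r_j}, and no index i of w satisfies {y : ‖y − m_i'‖ ≤ r_i'} ∩ S¹ = ∅. Then m ≤ n. -/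

import Mathlib

noncomputable section

open scoped BigOperators
open Classical

/-- The unit circle `S¹` in the plane (modeled as `ℂ ≅ ℝ²` with the Euclidean norm). -/
def S1 : Set ℂ := {x : ℂ | ‖x‖ = 1}

/-- The signal function `h_{(m,r)}`: indicator of the closed disk of center `m`, radius `r`. -/
def signal (m : ℂ) (r : ℝ) (x : ℂ) : ℕ := if ‖x - m‖ ≤ r then 1 else 0

/-- The boundary trace `∂h_{(m,r)} = {x ∈ S¹ : ‖x − m‖ = r}`. -/
def bTrace (m : ℂ) (r : ℝ) : Set ℂ := {x : ℂ | ‖x‖ = 1 ∧ ‖x - m‖ = r}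

/-- The sum `H_v` of the signal functions of the disk data `v = ((m_i, r_i))_{i<n}`. -/
def Hsum {n : ℕ} (v : Fin n → ℂ × ℝ) (x : ℂ) : ℕ := ∑ i, signal (v i).1 (v i).2 x

/-- Rotation of the plane by angle `t` about the origin. -/
def rot (t : ℝ) (x : ℂ) : ℂ := Complex.exp (t * Complex.I) * x

/-- `H(x⁺) = a`: `H` equals `a` just after `x` (counterclockwise). -/
def rightVal (H : ℂ → ℕ) (x : ℂ) (a : ℕ) : Prop :=
  ∃ δ > (0 : ℝ), ∀ t : ℝ, 0 < t → t < δ → H (rot t x) = a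

/-- `H(x⁻) = b`: `H` equals `b` just before `x`. -/
def leftVal (H : ℂ → ℕ) (x : ℂ) (b : ℕ) : Prop :=
  ∃ δ > (0 : ℝ), ∀ t : ℝ, -δ < t → t < 0 → H (rot t x) = b

/-- `H` is properly upper semicontinuous on `S¹`: at each point both one-sided limits
exist and the value equals their maximum. -/
def ProperlyUSC (H : ℂ → ℕ) : Prop :=
  ∀ x ∈ S1, ∃ a b : ℕ, rightVal H x a ∧ leftVal H x b ∧ H x = max a b

/-- `H* = max_{S¹} H`. -/
def maxOnS1 (H : ℂ → ℕ) : ℕ := sSup (H '' S1)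

/-- `H_* = min_{S¹} H`. -/
def minOnS1 (H : ℂ → ℕ) : ℕ := sInf (H '' S1)

/-- The superlevel set `{x ∈ S¹ : H(x) ≥ k}`. -/
def superlevel (H : ℂ → ℕ) (k : ℕ) : Set ℂ := {x ∈ S1 | k ≤ H x}

/-- Number of connected components of a subset of the plane. -/
def numCC (A : Set ℂ) : ℕ := Nat.card (ConnectedComponents ↥A)

/-- `τ(H) = Σ_{k=H_*+1}^{H*} (c_k(H) − 1)`. -/
def tau (H : ℂ → ℕ) : ℕ :=
  ∑ k ∈ Finset.Icc (minOnS1 H + 1) (maxOnS1 H), (numCC (superlevel H k) - 1)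

/-- `ρ` for the degrees-of-freedom count. -/
def rho (m : ℂ) (r : ℝ) : ℕ :=
  if bTrace m r = ∅ then 3
  else if (bTrace m r).ncard = 1 ∨ (bTrace m r).ncard = 2 then 1
  else 0

/-- `N`-degrees of freedom of a decomposition with `n ≤ N` signals. -/
def DoF (N : ℕ) {n : ℕ} (v : Fin n → ℂ × ℝ) : ℕ :=
  3 * (N - n) + ∑ i, rho (v i).1 (v i).2

namespace Aux16

lemma norm_rot (t : ℝ) (x : ℂ) : ‖rot t x‖ = ‖x‖ := by
  simp [rot, map_mul, Complex.norm_exp, Complex.norm_exp_ofReal_mul_I]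

lemma rot_zero (x : ℂ) : rot 0 x = x := by simp [rot]

lemma rightVal_unique {H : ℂ → ℕ} {x : ℂ} {a a' : ℕ}
    (h : rightVal H x a) (h' : rightVal H x a') : a = a' := by
  obtain ⟨d, hd, hh⟩ := h
  obtain ⟨d', hd', hh'⟩ := h'
  have h1 : (0:ℝ) < min d d' / 2 := by positivity
  have := hh _ h1 (by rw [div_lt_iff₀ (by norm_num)]; nlinarith [min_le_left d d'])
  have := hh' _ h1 (by rw [div_lt_iff₀ (by norm_num)]; nlinarith [min_le_right d d'])
  omega

lemma leftVal_unique {H : ℂ → ℕ} {x : ℂ} {a a' : ℕ}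
    (h : leftVal H x a) (h' : leftVal H x a') : a = a' := by
  obtain ⟨d, hd, hh⟩ := h
  obtain ⟨d', hd', hh'⟩ := h'
  have hm : 0 < min d d' := lt_min hd hd'
  have := hh (-(min d d'/2)) (by linarith [min_le_left d d']) (by linarith)
  have := hh' (-(min d d'/2)) (by linarith [min_le_right d d']) (by linarith)
  omega

noncomputable def rV (H : ℂ → ℕ) (x : ℂ) : ℕ :=
  if h : ∃ a, rightVal H x a then h.choose else 0

noncomputable def lV (H : ℂ → ℕ) (x : ℂ) : ℕ :=
  if h : ∃ a, leftVal H x a then h.choose else 0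

lemma rV_eq {H : ℂ → ℕ} {x : ℂ} {a : ℕ} (h : rightVal H x a) : rV H x = a := by
  have he : ∃ a, rightVal H x a := ⟨a, h⟩
  rw [rV, dif_pos he]
  exact rightVal_unique he.choose_spec h

lemma lV_eq {H : ℂ → ℕ} {x : ℂ} {a : ℕ} (h : leftVal H x a) : lV H x = a := by
  have he : ∃ a, leftVal H x a := ⟨a, h⟩
  rw [lV, dif_pos he]
  exact leftVal_unique he.choose_spec h

lemma rightVal_sum {ι : Type*} (s : Finset ι) (F : ι → ℂ → ℕ) (a : ι → ℕ) (x : ℂ)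
    (h : ∀ i ∈ s, rightVal (F i) x (a i)) :
    rightVal (fun y => ∑ i ∈ s, F i y) x (∑ i ∈ s, a i) := by
  classical
  induction s using Finset.induction_on with
  | empty => exact ⟨1, one_pos, by simp⟩
  | @insert i s his ih =>
    obtain ⟨d, hd, hh⟩ := h i (Finset.mem_insert_self i s)
    obtain ⟨d', hd', hh'⟩ := ih (fun j hj => h j (Finset.mem_insert_of_mem hj))
    refine ⟨min d d', lt_min hd hd', fun t ht ht' => ?_⟩
    have h2 := hh' t ht (lt_of_lt_of_le ht' (min_le_right d d'))
    simp only at h2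
    simp only [Finset.sum_insert his]
    rw [hh t ht (lt_of_lt_of_le ht' (min_le_left d d')), h2]

lemma leftVal_sum {ι : Type*} (s : Finset ι) (F : ι → ℂ → ℕ) (a : ι → ℕ) (x : ℂ)
    (h : ∀ i ∈ s, leftVal (F i) x (a i)) :
    leftVal (fun y => ∑ i ∈ s, F i y) x (∑ i ∈ s, a i) := by
  classical
  induction s using Finset.induction_on with
  | empty => exact ⟨1, one_pos, by simp⟩
  | @insert i s his ih =>
    obtain ⟨d, hd, hh⟩ := h i (Finset.mem_insert_self i s)
    obtain ⟨d', hd', hh'⟩ := ih (fun j hj => h j (Finset.mem_insert_of_mem hj))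
    refine ⟨min d d', lt_min hd hd', fun t ht ht' => ?_⟩
    have h2 := hh' t (lt_of_le_of_lt (neg_le_neg (min_le_right d d')) ht) ht'
    simp only at h2
    simp only [Finset.sum_insert his]
    rw [hh t (lt_of_le_of_lt (neg_le_neg (min_le_left d d')) ht) ht', h2]

lemma rot_inj {x : ℂ} (hx : x ≠ 0) {s t : ℝ} (h : rot s x = rot t x)
    (hd : |s - t| < 2 * Real.pi) : s = t := by
  have he : Complex.exp (s * Complex.I) = Complex.exp (t * Complex.I) :=
    mul_right_cancel₀ hx h
  rw [Complex.exp_eq_exp_iff_exists_int] at he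
  obtain ⟨k, hk⟩ := he
  have him := congrArg Complex.im hk
  simp [Complex.mul_im, Complex.add_im] at him
  have hst : s = t + k * (2 * Real.pi) := by
    simpa using him
  have hk0 : k = 0 := by
    by_contra hkne
    have h1 : (1:ℝ) ≤ |(k:ℝ)| := by
      have : (1:ℤ) ≤ |k| := Int.one_le_abs hkne
      calc (1:ℝ) = ((1:ℤ):ℝ) := by norm_num
        _ ≤ ((|k|:ℤ):ℝ) := by exact_mod_cast this
        _ = |(k:ℝ)| := by push_cast; ring
    have hπ := Real.pi_pos
    rw [hst] at hd
    have he2 : |t + (k:ℝ)*(2*Real.pi) - t| = |(k:ℝ)| * (2*Real.pi) := by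
      rw [show t + (k:ℝ)*(2*Real.pi) - t = (k:ℝ)*(2*Real.pi) by ring, abs_mul,
        abs_of_pos (by positivity : (0:ℝ) < 2*Real.pi)]
    rw [he2] at hd
    nlinarith
  rw [hst, hk0]; push_cast; ring

lemma rightVal_transfer {H H' : ℂ → ℕ} {F : Set ℂ} (hF : F.Finite) {x : ℂ} (hx : ‖x‖ = 1)
    (hagree : ∀ y, ‖y‖ = 1 → y ∉ F → H y = H' y) {a : ℕ} (h : rightVal H x a) :
    rightVal H' x a := by
  obtain ⟨d, hd, hh⟩ := h
  have hx0 : x ≠ 0 := by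
    intro h0; rw [h0] at hx; simp at hx
  set d1 := min d 1 with hd1def
  have hd1 : 0 < d1 := lt_min hd one_pos
  have hd1le : d1 ≤ 1 := min_le_right d 1
  set B : Set ℝ := {t | 0 < t ∧ t < d1 ∧ rot t x ∈ F} with hBdef
  have hπ := Real.pi_gt_three
  have hBinj : Set.InjOn (fun t => rot t x) B := by
    intro s hs t ht hst
    exact rot_inj hx0 hst (by
      rw [abs_sub_lt_iff]
      obtain ⟨hs1, hs2, _⟩ := hs
      obtain ⟨ht1, ht2, _⟩ := ht
      constructor <;> nlinarith)
  have hBf : B.Finite := by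
    refine Set.Finite.of_finite_image (hF.subset ?_) hBinj
    rintro y ⟨t, ht, rfl⟩
    exact ht.2.2
  have key : ∃ d2 > (0:ℝ), d2 ≤ d1 ∧ ∀ t, 0 < t → t < d2 → t ∉ B := by
    by_cases hB : B.Nonempty
    · have hne : hBf.toFinset.Nonempty := by rwa [Set.Finite.toFinset_nonempty]
      set μ := hBf.toFinset.min' hne with hμ
      have hμB : μ ∈ B := by
        have := hBf.toFinset.min'_mem hne
        rwa [Set.Finite.mem_toFinset] at this
      refine ⟨min d1 μ, lt_min hd1 hμB.1, min_le_left _ _, fun t ht1 ht2 htB => ?_⟩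
      have : μ ≤ t := hBf.toFinset.min'_le t (by rwa [Set.Finite.mem_toFinset])
      have : t < μ := lt_of_lt_of_le ht2 (min_le_right _ _)
      linarith
    · exact ⟨d1, hd1, le_refl _, fun t _ _ htB => hB ⟨t, htB⟩⟩
  obtain ⟨d2, hd2, hd2le, hd2B⟩ := key
  refine ⟨d2, hd2, fun t ht1 ht2 => ?_⟩
  have htd : t < d := lt_of_lt_of_le (lt_of_lt_of_le ht2 hd2le) (min_le_left d 1)
  have hnF : rot t x ∉ F := fun hmem =>
    hd2B t ht1 ht2 ⟨ht1, lt_of_lt_of_le ht2 hd2le, hmem⟩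
  rw [← hagree _ (by rw [norm_rot]; exact hx) hnF]
  exact hh t ht1 htd

lemma leftVal_transfer {H H' : ℂ → ℕ} {F : Set ℂ} (hF : F.Finite) {x : ℂ} (hx : ‖x‖ = 1)
    (hagree : ∀ y, ‖y‖ = 1 → y ∉ F → H y = H' y) {a : ℕ} (h : leftVal H x a) :
    leftVal H' x a := by
  obtain ⟨d, hd, hh⟩ := h
  have hx0 : x ≠ 0 := by
    intro h0; rw [h0] at hx; simp at hx
  set d1 := min d 1 with hd1def
  have hd1 : 0 < d1 := lt_min hd one_pos
  have hd1le : d1 ≤ 1 := min_le_right d 1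
  set B : Set ℝ := {t | -d1 < t ∧ t < 0 ∧ rot t x ∈ F} with hBdef
  have hπ := Real.pi_gt_three
  have hBinj : Set.InjOn (fun t => rot t x) B := by
    intro s hs t ht hst
    exact rot_inj hx0 hst (by
      rw [abs_sub_lt_iff]
      obtain ⟨hs1, hs2, _⟩ := hs
      obtain ⟨ht1, ht2, _⟩ := ht
      constructor <;> nlinarith)
  have hBf : B.Finite := by
    refine Set.Finite.of_finite_image (hF.subset ?_) hBinj
    rintro y ⟨t, ht, rfl⟩
    exact ht.2.2
  have key : ∃ d2 > (0:ℝ), d2 ≤ d1 ∧ ∀ t, -d2 < t → t < 0 → t ∉ B := by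
    by_cases hB : B.Nonempty
    · have hne : hBf.toFinset.Nonempty := by rwa [Set.Finite.toFinset_nonempty]
      set μ := hBf.toFinset.max' hne with hμ
      have hμB : μ ∈ B := by
        have := hBf.toFinset.max'_mem hne
        rwa [Set.Finite.mem_toFinset] at this
      refine ⟨min d1 (-μ), lt_min hd1 (by linarith [hμB.2.1]), min_le_left _ _,
        fun t ht1 ht2 htB => ?_⟩
      have h1 : t ≤ μ := hBf.toFinset.le_max' t (by rwa [Set.Finite.mem_toFinset])
      have h2 : μ ≤ -min d1 (-μ) := by
        have := min_le_right d1 (-μ); linarith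
      linarith
    · exact ⟨d1, hd1, le_refl _, fun t _ _ htB => hB ⟨t, htB⟩⟩
  obtain ⟨d2, hd2, hd2le, hd2B⟩ := key
  refine ⟨d2, hd2, fun t ht1 ht2 => ?_⟩
  have htd : -d < t := by
    have h1 : d1 ≤ d := min_le_left d 1
    linarith
  have hnF : rot t x ∉ F := fun hmem =>
    hd2B t ht1 ht2 ⟨by linarith, ht2, hmem⟩
  rw [← hagree _ (by rw [norm_rot]; exact hx) hnF]
  exact hh t htd ht2

lemma norm_sq_eq (z : ℂ) : ‖z‖^2 = Complex.normSq z := by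
  rw [Complex.sq_norm]

lemma rot_re (t : ℝ) (x : ℂ) : (rot t x).re = Real.cos t * x.re - Real.sin t * x.im := by
  simp [rot, Complex.exp_mul_I, Complex.add_re, Complex.mul_re, Complex.add_im, Complex.mul_im,
    Complex.cos_ofReal_re, Complex.sin_ofReal_re, Complex.cos_ofReal_im, Complex.sin_ofReal_im,
    Complex.I_re, Complex.I_im]

lemma rot_im (t : ℝ) (x : ℂ) : (rot t x).im = Real.cos t * x.im + Real.sin t * x.re := by
  simp [rot, Complex.exp_mul_I, Complex.add_re, Complex.mul_re, Complex.add_im, Complex.mul_im,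
    Complex.cos_ofReal_re, Complex.sin_ofReal_re, Complex.cos_ofReal_im, Complex.sin_ofReal_im,
    Complex.I_re, Complex.I_im]

lemma key_identity (m x : ℂ) (t : ℝ) :
    ‖rot t x - m‖^2 - ‖x - m‖^2
      = 2*(((starRingEnd ℂ) m * x).re * (1 - Real.cos t)
        + ((starRingEnd ℂ) m * x).im * Real.sin t) := by
  have hsc := Real.sin_sq_add_cos_sq t
  simp only [norm_sq_eq, Complex.normSq_apply, Complex.sub_re, Complex.sub_im, rot_re, rot_im,
    Complex.mul_re, Complex.mul_im, Complex.conj_re, Complex.conj_im]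
  nlinarith [sq_nonneg x.re, sq_nonneg x.im]

lemma norm_le_iff_sq {r : ℝ} (hr : 0 ≤ r) (z : ℂ) : ‖z‖ ≤ r ↔ ‖z‖^2 ≤ r^2 := by
  constructor <;> intro h <;> nlinarith [norm_nonneg z]

lemma signal_eq_one_iff {m : ℂ} {r : ℝ} {y : ℂ} : signal m r y = 1 ↔ ‖y - m‖ ≤ r := by
  unfold signal; split <;> simp_all

lemma signal_eq_zero_iff {m : ℂ} {r : ℝ} {y : ℂ} : signal m r y = 0 ↔ ¬ (‖y - m‖ ≤ r) := by
  unfold signal; split <;> simp_all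

lemma signal_le_one (m : ℂ) (r : ℝ) (y : ℂ) : signal m r y ≤ 1 := by
  unfold signal; split <;> simp

lemma phi_hasDerivAt (c : ℂ) :
    HasDerivAt (fun t : ℝ => c.re*(1-Real.cos t) + c.im*Real.sin t) c.im 0 := by
  have h1 : HasDerivAt (fun t : ℝ => c.re*(1-Real.cos t)) (c.re * Real.sin 0) 0 := by
    have := ((Real.hasDerivAt_cos 0).const_sub 1).const_mul c.re
    simpa using this
  have h2 : HasDerivAt (fun t : ℝ => c.im*Real.sin t) (c.im * Real.cos 0) 0 :=
    (Real.hasDerivAt_sin 0).const_mul c.im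
  have := h1.add h2
  simp only [Real.sin_zero, Real.cos_zero, mul_zero, mul_one, zero_add] at this
  exact this

lemma deriv_neg_side {φ : ℝ → ℝ} (hφ0 : φ 0 = 0) {v : ℝ} (hd : HasDerivAt φ v 0) (hv : v < 0) :
    ∃ δ > (0:ℝ), (∀ t, 0 < t → t < δ → φ t < 0) ∧ (∀ t, -δ < t → t < 0 → 0 < φ t) := by
  have hs := hasDerivAt_iff_tendsto_slope.mp hd
  have hlt : ∀ᶠ t in nhdsWithin 0 {(0:ℝ)}ᶜ, slope φ 0 t < 0 :=
    hs.eventually_lt_const hv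
  rw [eventually_nhdsWithin_iff, Metric.eventually_nhds_iff] at hlt
  obtain ⟨ε, hε, hεs⟩ := hlt
  refine ⟨ε, hε, fun t ht1 ht2 => ?_, fun t ht1 ht2 => ?_⟩
  · have hsl := hεs (show dist t 0 < ε by
      simp [Real.dist_eq, abs_of_pos ht1]; exact ht2)
      (by simpa using ne_of_gt ht1)
    rw [slope_def_field, hφ0] at hsl
    have := mul_neg_of_neg_of_pos hsl ht1
    rw [sub_zero, sub_zero] at this
    calc φ t = φ t / t * t := by field_simp
    _ < 0 := this
  · have hsl := hεs (show dist t 0 < ε by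
      simp [Real.dist_eq, abs_of_neg ht2]; linarith)
      (by simpa using ne_of_lt ht2)
    rw [slope_def_field, hφ0] at hsl
    have := mul_pos_of_neg_of_neg hsl ht2
    rw [sub_zero, sub_zero] at this
    have ht0 : t ≠ 0 := ne_of_lt ht2
    calc (0:ℝ) < φ t / t * t := this
    _ = φ t := by field_simp

lemma signal_sides (m : ℂ) (r : ℝ) (hr : 0 < r) (x : ℂ) (hx : ‖x‖ = 1) :
    ∃ a b : ℕ, rightVal (signal m r) x a ∧ leftVal (signal m r) x b ∧
      a ≤ signal m r x ∧ b ≤ signal m r x ∧ a ≤ 1 ∧ b ≤ 1 ∧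
      (‖x - m‖ ≠ r → a = signal m r x ∧ b = signal m r x) ∧
      (((starRingEnd ℂ) m * x).im = 0 → a = b) ∧
      (‖x - m‖ = r → ((starRingEnd ℂ) m * x).im < 0 → a = 1 ∧ b = 0) ∧
      (‖x - m‖ = r → 0 < ((starRingEnd ℂ) m * x).im → a = 0 ∧ b = 1) := by
  set c := (starRingEnd ℂ) m * x with hc
  set φ : ℝ → ℝ := fun t => c.re*(1-Real.cos t) + c.im*Real.sin t with hφ
  have hφ0 : φ 0 = 0 := by simp [hφ]
  have hkey : ∀ t : ℝ, ‖rot t x - m‖^2 = ‖x - m‖^2 + 2 * φ t := by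
    intro t
    have := key_identity m x t
    rw [← hc] at this
    simp only [hφ]
    linarith
  have hsig1 : ∀ t : ℝ, 2 * φ t ≤ r^2 - ‖x - m‖^2 → signal m r (rot t x) = 1 := by
    intro t ht
    rw [signal_eq_one_iff, norm_le_iff_sq (le_of_lt hr), hkey t]
    linarith
  have hsig0 : ∀ t : ℝ, r^2 - ‖x - m‖^2 < 2 * φ t → signal m r (rot t x) = 0 := by
    intro t ht
    rw [signal_eq_zero_iff, norm_le_iff_sq (le_of_lt hr), hkey t]
    intro hcon; linarith
  have hφcont : ContinuousAt φ 0 := (phi_hasDerivAt c).continuousAt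
  rcases lt_trichotomy (‖x - m‖) r with hlt | heq | hgt
  · -- strictly inside
    have hsx : signal m r x = 1 := signal_eq_one_iff.mpr (le_of_lt hlt)
    have hD : 0 < r^2 - ‖x - m‖^2 := by nlinarith [norm_nonneg (x - m)]
    have hev : ∀ᶠ t in nhds (0:ℝ), 2 * φ t < r^2 - ‖x - m‖^2 := by
      have : ContinuousAt (fun t => 2 * φ t) 0 := (continuous_const.continuousAt).mul hφcont
      have := this.tendsto
      rw [hφ0, mul_zero] at this
      exact this.eventually_lt_const hD
    rw [Metric.eventually_nhds_iff] at hev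
    obtain ⟨ε, hε, hεs⟩ := hev
    have hone : ∀ t : ℝ, |t| < ε → signal m r (rot t x) = 1 := fun t ht =>
      hsig1 t (le_of_lt (hεs (by simpa [Real.dist_eq] using ht)))
    refine ⟨1, 1, ⟨ε, hε, fun t ht1 ht2 => hone t (by rw [abs_of_pos ht1]; exact ht2)⟩,
      ⟨ε, hε, fun t ht1 ht2 => hone t (by rw [abs_of_neg ht2]; linarith)⟩, ?_⟩
    exact ⟨by simp [hsx], by simp [hsx], le_refl 1, le_refl 1, fun _ => ⟨hsx.symm, hsx.symm⟩,
      fun _ => rfl, fun h => absurd h (ne_of_lt hlt), fun h => absurd h (ne_of_lt hlt)⟩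
  · -- on the boundary
    have hsx : signal m r x = 1 := signal_eq_one_iff.mpr (le_of_eq heq)
    have hD : r^2 - ‖x - m‖^2 = 0 := by rw [heq]; ring
    rcases lt_trichotomy c.im 0 with him | him | him
    · obtain ⟨δ, hδ, hright, hleft⟩ := deriv_neg_side hφ0 (phi_hasDerivAt c) him
      refine ⟨1, 0, ⟨δ, hδ, fun t ht1 ht2 => hsig1 t (by have := hright t ht1 ht2; linarith)⟩,
        ⟨δ, hδ, fun t ht1 ht2 => hsig0 t (by have := hleft t ht1 ht2; linarith)⟩, ?_⟩
      refine ⟨by simp [hsx], by simp, by simp, by simp, fun h => absurd heq h, ?_, ?_, ?_⟩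
      · intro h; exact absurd h (ne_of_lt him)
      · intro _ _; exact ⟨rfl, rfl⟩
      · intro _ h; linarith
    · -- tangential case : c.im = 0
      rcases lt_trichotomy c.re 0 with hre | hre | hre
      · -- φ t = c.re (1-cos t) ≤ 0 always : signal 1 on both sides
        have hone : ∀ t : ℝ, signal m r (rot t x) = 1 := by
          intro t
          refine hsig1 t ?_
          have h1 : φ t = c.re * (1 - Real.cos t) := by simp [hφ, him]
          have h2 : 0 ≤ 1 - Real.cos t := by linarith [Real.cos_le_one t]
          have : c.re * (1 - Real.cos t) ≤ 0 := mul_nonpos_of_nonpos_of_nonneg (le_of_lt hre) h2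
          linarith
        refine ⟨1, 1, ⟨1, one_pos, fun t _ _ => hone t⟩, ⟨1, one_pos, fun t _ _ => hone t⟩, ?_⟩
        exact ⟨by simp [hsx], by simp [hsx], le_refl 1, le_refl 1, fun h => absurd heq h,
          fun _ => rfl, fun _ h => absurd h (by rw [him]; exact lt_irrefl 0),
          fun _ h => absurd h (by rw [him]; exact lt_irrefl 0)⟩
      · -- c = 0, so m = 0 and r = 1 : signal constantly 1
        have hc0 : c = 0 := Complex.ext hre him
        have hx0 : x ≠ 0 := fun h => by rw [h] at hx; simp at hx
        have hm0 : m = 0 := by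
          have : (starRingEnd ℂ) m = 0 := by
            rcases mul_eq_zero.mp hc0 with h | h
            · exact h
            · exact absurd h hx0
          simpa using this
        have hone : ∀ t : ℝ, signal m r (rot t x) = 1 := by
          intro t
          rw [signal_eq_one_iff, hm0, sub_zero, norm_rot, hx]
          rw [hm0, sub_zero, hx] at heq
          linarith
        refine ⟨1, 1, ⟨1, one_pos, fun t _ _ => hone t⟩, ⟨1, one_pos, fun t _ _ => hone t⟩, ?_⟩
        exact ⟨by simp [hsx], by simp [hsx], le_refl 1, le_refl 1, fun h => absurd heq h,
          fun _ => rfl, fun _ h => absurd h (by rw [him]; exact lt_irrefl 0),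
          fun _ h => absurd h (by rw [him]; exact lt_irrefl 0)⟩
      · -- c.re > 0 : φ t > 0 for 0 < |t| ≤ 1 : signal 0 on both sides
        have hzero : ∀ t : ℝ, 0 < |t| → |t| < 1 → signal m r (rot t x) = 0 := by
          intro t ht1 ht2
          refine hsig0 t ?_
          have h1 : φ t = c.re * (1 - Real.cos t) := by simp [hφ, him]
          have hπ := Real.pi_gt_three
          have hcos : Real.cos |t| < 1 := by
            have := Real.cos_lt_cos_of_nonneg_of_le_pi (le_refl (0:ℝ)) (by linarith) ht1
            simpa using this
          have hcos' : Real.cos t < 1 := by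
            rcases abs_cases t with ⟨h, _⟩ | ⟨h, _⟩
            · rwa [h] at hcos
            · rw [← Real.cos_neg, ← h]; exact hcos
          have : 0 < c.re * (1 - Real.cos t) := mul_pos hre (by linarith)
          linarith
        refine ⟨0, 0, ⟨1, one_pos, fun t ht1 ht2 => hzero t (by rwa [abs_of_pos ht1]) (by rwa [abs_of_pos ht1])⟩,
          ⟨1, one_pos, fun t ht1 ht2 => hzero t (by rw [abs_of_neg ht2]; linarith) (by rw [abs_of_neg ht2]; linarith)⟩, ?_⟩
        exact ⟨Nat.zero_le _, Nat.zero_le _, zero_le_one, zero_le_one, fun h => absurd heq h,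
          fun _ => rfl, fun _ h => absurd h (by rw [him]; exact lt_irrefl 0),
          fun _ h => absurd h (by rw [him]; exact lt_irrefl 0)⟩
    · -- c.im > 0
      obtain ⟨δ, hδ, hright, hleft⟩ := deriv_neg_side (φ := fun t => -φ t) (by simp [hφ0])
        ((phi_hasDerivAt c).neg) (by linarith) 
      refine ⟨0, 1, ⟨δ, hδ, fun t ht1 ht2 => hsig0 t (by have := hright t ht1 ht2; simp at this; linarith)⟩,
        ⟨δ, hδ, fun t ht1 ht2 => hsig1 t (by have := hleft t ht1 ht2; simp at this; linarith)⟩, ?_⟩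
      refine ⟨by simp, by simp [hsx], by simp, by simp, fun h => absurd heq h, ?_, ?_, ?_⟩
      · intro h; exact absurd h (ne_of_gt him)
      · intro _ h; linarith
      · intro _ _; exact ⟨rfl, rfl⟩
  · -- strictly outside
    have hsx : signal m r x = 0 := signal_eq_zero_iff.mpr (by linarith)
    have hD : ‖x - m‖^2 - r^2 > 0 := by nlinarith
    have hev : ∀ᶠ t in nhds (0:ℝ), 2 * φ t > -(‖x - m‖^2 - r^2) := by
      have : ContinuousAt (fun t => 2 * φ t) 0 := (continuous_const.continuousAt).mul hφcont
      have := this.tendsto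
      rw [hφ0, mul_zero] at this
      exact this.eventually_const_lt (by linarith)
    rw [Metric.eventually_nhds_iff] at hev
    obtain ⟨ε, hε, hεs⟩ := hev
    have hzero : ∀ t : ℝ, |t| < ε → signal m r (rot t x) = 0 := fun t ht =>
      hsig0 t (by have := hεs (by simpa [Real.dist_eq] using ht); linarith)
    refine ⟨0, 0, ⟨ε, hε, fun t ht1 ht2 => hzero t (by rw [abs_of_pos ht1]; exact ht2)⟩,
      ⟨ε, hε, fun t ht1 ht2 => hzero t (by rw [abs_of_neg ht2]; linarith)⟩, ?_⟩
    exact ⟨Nat.zero_le _, Nat.zero_le _, zero_le_one, zero_le_one, fun _ => ⟨hsx.symm, hsx.symm⟩,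
      fun _ => rfl, fun h => absurd h (ne_of_gt hgt), fun h => absurd h (ne_of_gt hgt)⟩

noncomputable def jmp (p : ℂ × ℝ) (x : ℂ) : ℤ :=
  (rV (signal p.1 p.2) x : ℤ) - (lV (signal p.1 p.2) x)

lemma jmp_master (p : ℂ × ℝ) (hr : 0 < p.2) {x : ℂ} (hx : ‖x‖ = 1) :
    rightVal (signal p.1 p.2) x (rV (signal p.1 p.2) x)
  ∧ leftVal (signal p.1 p.2) x (lV (signal p.1 p.2) x)
  ∧ rV (signal p.1 p.2) x ≤ signal p.1 p.2 x ∧ lV (signal p.1 p.2) x ≤ signal p.1 p.2 x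
  ∧ rV (signal p.1 p.2) x ≤ 1 ∧ lV (signal p.1 p.2) x ≤ 1
  ∧ (x ∉ bTrace p.1 p.2 → jmp p x = 0)
  ∧ (((starRingEnd ℂ) p.1 * x).im = 0 → jmp p x = 0)
  ∧ (x ∈ bTrace p.1 p.2 → ((starRingEnd ℂ) p.1 * x).im < 0 →
      jmp p x = 1 ∧ rV (signal p.1 p.2) x = 1 ∧ lV (signal p.1 p.2) x = 0)
  ∧ (x ∈ bTrace p.1 p.2 → 0 < ((starRingEnd ℂ) p.1 * x).im →
      jmp p x = -1 ∧ rV (signal p.1 p.2) x = 0 ∧ lV (signal p.1 p.2) x = 1) := by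
  obtain ⟨a, b, ha, hb, h1, h2, h3, h4, h5, h6, h7, h8⟩ := signal_sides p.1 p.2 hr x hx
  have hra : rV (signal p.1 p.2) x = a := rV_eq ha
  have hlb : lV (signal p.1 p.2) x = b := lV_eq hb
  refine ⟨hra ▸ ha, hlb ▸ hb, hra ▸ h1, hlb ▸ h2, hra ▸ h3, hlb ▸ h4, ?_, ?_, ?_, ?_⟩
  · intro hnt
    have hne : ‖x - p.1‖ ≠ p.2 := fun he => hnt ⟨hx, he⟩
    obtain ⟨e1, e2⟩ := h5 hne
    simp [jmp, hra, hlb, e1, e2]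
  · intro him
    simp [jmp, hra, hlb, h6 him]
  · intro ht him
    obtain ⟨e1, e2⟩ := h7 ht.2 him
    exact ⟨by simp [jmp, hra, hlb, e1, e2], hra ▸ e1, hlb ▸ e2⟩
  · intro ht him
    obtain ⟨e1, e2⟩ := h8 ht.2 him
    exact ⟨by simp [jmp, hra, hlb, e1, e2], hra ▸ e1, hlb ▸ e2⟩

lemma norm_sub_sq' (x m : ℂ) :
    ‖x - m‖^2 = ‖x‖^2 + ‖m‖^2 - 2*((starRingEnd ℂ) m * x).re := by
  simp only [norm_sq_eq, Complex.normSq_apply, Complex.mul_re, Complex.mul_im, Complex.sub_re,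
    Complex.sub_im, Complex.conj_re, Complex.conj_im]
  ring

lemma re_of_mem_trace {m : ℂ} {r : ℝ} {x : ℂ} (hx : x ∈ bTrace m r) :
    ((starRingEnd ℂ) m * x).re = (1 + ‖m‖^2 - r^2)/2 := by
  obtain ⟨h1, h2⟩ := hx
  have := norm_sub_sq' x m
  rw [h1, h2] at this
  linarith

lemma normsq_of_unit {m x : ℂ} (hx : ‖x‖ = 1) :
    ((starRingEnd ℂ) m * x).re^2 + ((starRingEnd ℂ) m * x).im^2 = ‖m‖^2 := by
  have h1 : ‖(starRingEnd ℂ) m * x‖ = ‖m‖ := by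
    rw [norm_mul, RCLike.norm_conj, hx, mul_one]
  have h2 := norm_sq_eq ((starRingEnd ℂ) m * x)
  rw [h1, Complex.normSq_apply] at h2
  nlinarith [h2]

lemma trace_subset_pair {m : ℂ} (hm : m ≠ 0) (r : ℝ) :
    ∃ p q : ℂ, bTrace m r ⊆ {p, q} := by
  set d : ℝ := (1 + ‖m‖^2 - r^2)/2 with hd
  set st : ℝ := Real.sqrt (‖m‖^2 - d^2) with hst
  have hcm : (starRingEnd ℂ) m ≠ 0 := fun h => hm (by simpa using h)
  refine ⟨((d : ℂ) + (st:ℂ)*Complex.I)/((starRingEnd ℂ) m),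
    ((d : ℂ) - (st:ℂ)*Complex.I)/((starRingEnd ℂ) m), fun x hx => ?_⟩
  set z := (starRingEnd ℂ) m * x with hz
  have hre : z.re = d := re_of_mem_trace hx
  have hnz : z.re^2 + z.im^2 = ‖m‖^2 := normsq_of_unit hx.1
  have him2 : z.im^2 = ‖m‖^2 - d^2 := by rw [← hre]; linarith
  have hs : st = |z.im| := by rw [hst, ← him2, Real.sqrt_sq_eq_abs]
  have hxz : x = z / ((starRingEnd ℂ) m) := by
    rw [hz, mul_comm, mul_div_assoc, div_self hcm, mul_one]
  rcases abs_cases z.im with ⟨h, _⟩ | ⟨h, _⟩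
  · left
    rw [hxz]
    congr 1
    apply Complex.ext <;> simp [hre, hs, h]
  · right
    rw [hxz]
    congr 1
    apply Complex.ext <;> simp [hre, hs, h]

lemma sphere_infinite : ({x : ℂ | ‖x‖ = 1} : Set ℂ).Infinite := by
  have hπ := Real.pi_gt_three
  have hinj : Set.InjOn (fun t => rot t 1) (Set.Ioo (0:ℝ) 1) := by
    intro s hs t ht hst
    exact rot_inj one_ne_zero hst (by
      rw [abs_sub_lt_iff]
      obtain ⟨hs1, hs2⟩ := hs
      obtain ⟨ht1, ht2⟩ := ht
      constructor <;> nlinarith)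
  have hmaps : Set.MapsTo (fun t => rot t 1) (Set.Ioo (0:ℝ) 1) {x : ℂ | ‖x‖ = 1} := by
    intro t _
    show ‖rot t 1‖ = 1
    rw [norm_rot, norm_one]
  exact Set.infinite_of_injOn_mapsTo hinj hmaps (Set.Ioo_infinite one_pos)

lemma trace_tangent {m : ℂ} {r : ℝ} (h2 : (bTrace m r).ncard = 2) {x : ℂ}
    (hx : x ∈ bTrace m r) : ((starRingEnd ℂ) m * x).im ≠ 0 := by
  intro him
  by_cases hm : m = 0
  · subst hm
    have hr1 : r = 1 := by
      obtain ⟨h1', h2'⟩ := hx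
      rw [sub_zero, h1'] at h2'
      exact h2'.symm
    have : bTrace 0 r = {x : ℂ | ‖x‖ = 1} := by
      ext y
      simp [bTrace, hr1]
    rw [this] at h2
    rw [Set.Infinite.ncard sphere_infinite] at h2
    omega
  · have hsub : bTrace m r ⊆ {x} := by
      intro y hy
      set zx := (starRingEnd ℂ) m * x with hzx
      set zy := (starRingEnd ℂ) m * y with hzy
      have hrex : zx.re = (1 + ‖m‖^2 - r^2)/2 := re_of_mem_trace hx
      have hrey : zy.re = (1 + ‖m‖^2 - r^2)/2 := re_of_mem_trace hy
      have hnx : zx.re^2 + zx.im^2 = ‖m‖^2 := normsq_of_unit hx.1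
      have hny : zy.re^2 + zy.im^2 = ‖m‖^2 := normsq_of_unit hy.1
      have himy : zy.im = 0 := by nlinarith [sq_nonneg zy.im]
      have hzz : zy = zx := Complex.ext (by rw [hrex, hrey]) (by rw [himy, him])
      have hcm : (starRingEnd ℂ) m ≠ 0 := fun h => hm (by simpa using h)
      have := mul_left_cancel₀ hcm (hzy ▸ hzx ▸ hzz)
      simpa using this
    have := Set.ncard_le_ncard hsub (Set.finite_singleton x)
    rw [Set.ncard_singleton] at this
    omega

lemma S1_preconnected : IsPreconnected S1 := by
  have h : S1 = Metric.sphere (0:ℂ) 1 := by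
    ext y
    simp [S1, mem_sphere_zero_iff_norm]
  rw [h]
  exact (isConnected_sphere (by rw [Complex.rank_real_complex]; norm_num) 0
    zero_le_one).isPreconnected

lemma nonbase_two {m : ℂ} {r : ℝ} (hr : 0 < r)
    (hmeet : ({y : ℂ | ‖y - m‖ ≤ r} ∩ S1).Nonempty)
    (hnb : ¬ S1 ⊆ {y : ℂ | ‖y - m‖ ≤ r})
    (hcard : bTrace m r = ∅ ∨ (bTrace m r).ncard = 2) :
    (bTrace m r).ncard = 2 := by
  rcases hcard with h | h
  · exfalso
    obtain ⟨p, hp1, hp2⟩ := hmeet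
    obtain ⟨q, hq1, hq2⟩ := Set.not_subset.mp hnb
    have hcont : ContinuousOn (fun y : ℂ => ‖y - m‖) S1 :=
      ((continuous_id.sub continuous_const).norm).continuousOn
    have hIcc : r ∈ Set.Icc (‖p - m‖) (‖q - m‖) := ⟨hp1, le_of_not_ge hq2⟩
    obtain ⟨y, hy1, hy2⟩ := S1_preconnected.intermediate_value hp2 hq1 hcont hIcc
    have : y ∈ bTrace m r := ⟨hy1, hy2⟩
    rw [h] at this
    exact this
  · exact h

lemma base_jmp_zero {m : ℂ} {r : ℝ} (hb : S1 ⊆ {y : ℂ | ‖y - m‖ ≤ r}) {x : ℂ}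
    (hx : ‖x‖ = 1) : jmp (m, r) x = 0 := by
  have hone : ∀ t : ℝ, signal m r (rot t x) = 1 := by
    intro t
    rw [signal_eq_one_iff]
    exact hb (show ‖rot t x‖ = 1 by rw [norm_rot, hx])
  have hrv : rightVal (signal m r) x 1 := ⟨1, one_pos, fun t _ _ => hone t⟩
  have hlv : leftVal (signal m r) x 1 := ⟨1, one_pos, fun t _ _ => hone t⟩
  simp [jmp, rV_eq hrv, lV_eq hlv]

lemma trace_finite {m : ℂ} {r : ℝ}
    (h : bTrace m r = ∅ ∨ (bTrace m r).ncard = 2) : (bTrace m r).Finite := by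
  rcases h with h | h
  · rw [h]; exact Set.finite_empty
  · obtain ⟨a, b, _, hab⟩ := Set.ncard_eq_two.mp h
    rw [hab]
    exact (Set.finite_singleton b).insert a


lemma jmp_abs_le_one (p : ℂ × ℝ) (hr : 0 < p.2) {x : ℂ} (hx : ‖x‖ = 1) : |jmp p x| ≤ 1 := by
  obtain ⟨_, _, _, _, h5, h6, _⟩ := jmp_master p hr hx
  rw [jmp, abs_le]
  constructor <;> [skip; skip] <;> omega

end Aux16

open Aux16

/-- a DoF-maximizing decomposition `w` of `f` (properly u.s.c., all
boundary traces with exactly 0 or 2 elements) using the same number of disks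
containing `S¹` as another decomposition `v` of `f`, and with every disk meeting
`S¹`, uses no more signals than `v`. -/
theorem stmt16 {n m : ℕ} (f : ℂ → ℕ) (v : Fin n → ℂ × ℝ) (w : Fin m → ℂ × ℝ)
    (hrv : ∀ i, 0 < (v i).2) (hrw : ∀ j, 0 < (w j).2)
    (hv : {x ∈ S1 | Hsum v x ≠ f x}.Finite)
    (hw : {x ∈ S1 | Hsum w x ≠ f x}.Finite)
    (husc : ProperlyUSC (Hsum w))
    (hcard : ∀ j : Fin m,
      bTrace (w j).1 (w j).2 = ∅ ∨ (bTrace (w j).1 (w j).2).ncard = 2)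
    (hbase : Nat.card {j : Fin m // S1 ⊆ {y : ℂ | ‖y - (w j).1‖ ≤ (w j).2}}
           = Nat.card {i : Fin n // S1 ⊆ {y : ℂ | ‖y - (v i).1‖ ≤ (v i).2}})
    (hmeet : ∀ j : Fin m, ({y : ℂ | ‖y - (w j).1‖ ≤ (w j).2} ∩ S1).Nonempty) :
    m ≤ n := by
  classical
  set PW : Fin m → Prop := fun j => S1 ⊆ {y : ℂ | ‖y - (w j).1‖ ≤ (w j).2} with hPW
  set PV : Fin n → Prop := fun i => S1 ⊆ {y : ℂ | ‖y - (v i).1‖ ≤ (v i).2} with hPV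
  set NW := Finset.univ.filter (fun j => ¬ PW j) with hNW
  set NV := Finset.univ.filter (fun i => ¬ PV i) with hNVd
  set BW := Finset.univ.filter PW with hBW
  set BV := Finset.univ.filter PV with hBV
  -- base cards agree
  have hBcard : BW.card = BV.card := by
    have h1 : Nat.card {j : Fin m // PW j} = BW.card := by
      rw [Nat.card_eq_fintype_card, Fintype.card_subtype]
    have h2 : Nat.card {i : Fin n // PV i} = BV.card := by
      rw [Nat.card_eq_fintype_card, Fintype.card_subtype]
    rw [← h1, ← h2]
    exact hbase
  -- one-sided limits of the sums
  have hRW : ∀ x : ℂ, ‖x‖ = 1 →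
      rightVal (Hsum w) x (∑ j, rV (signal (w j).1 (w j).2) x) := fun x hx =>
    rightVal_sum Finset.univ (fun j y => signal (w j).1 (w j).2 y) _ x
      (fun j _ => (jmp_master (w j) (hrw j) hx).1)
  have hLW : ∀ x : ℂ, ‖x‖ = 1 →
      leftVal (Hsum w) x (∑ j, lV (signal (w j).1 (w j).2) x) := fun x hx =>
    leftVal_sum Finset.univ (fun j y => signal (w j).1 (w j).2 y) _ x
      (fun j _ => (jmp_master (w j) (hrw j) hx).2.1)
  have hRV : ∀ x : ℂ, ‖x‖ = 1 →
      rightVal (Hsum v) x (∑ i, rV (signal (v i).1 (v i).2) x) := fun x hx =>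
    rightVal_sum Finset.univ (fun i y => signal (v i).1 (v i).2 y) _ x
      (fun i _ => (jmp_master (v i) (hrv i) hx).1)
  have hLV : ∀ x : ℂ, ‖x‖ = 1 →
      leftVal (Hsum v) x (∑ i, lV (signal (v i).1 (v i).2) x) := fun x hx =>
    leftVal_sum Finset.univ (fun i y => signal (v i).1 (v i).2 y) _ x
      (fun i _ => (jmp_master (v i) (hrv i) hx).2.1)
  -- transfer between the two sums
  set F : Set ℂ := {x ∈ S1 | Hsum v x ≠ f x} ∪ {x ∈ S1 | Hsum w x ≠ f x} with hFdef
  have hF : F.Finite := hv.union hw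
  have hagree : ∀ y, ‖y‖ = 1 → y ∉ F → Hsum w y = Hsum v y := by
    intro y hy hyF
    rw [hFdef, Set.mem_union] at hyF
    push_neg at hyF
    obtain ⟨h1, h2⟩ := hyF
    have hyS : y ∈ S1 := hy
    have e1 : Hsum v y = f y := by
      by_contra hc; exact h1 ⟨hyS, hc⟩
    have e2 : Hsum w y = f y := by
      by_contra hc; exact h2 ⟨hyS, hc⟩
    rw [e1, e2]
  have hJ : ∀ x : ℂ, ‖x‖ = 1 → (∑ j, jmp (w j) x) = (∑ i, jmp (v i) x) := by
    intro x hx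
    have e1 : (∑ j, rV (signal (w j).1 (w j).2) x) = ∑ i, rV (signal (v i).1 (v i).2) x :=
      rightVal_unique (rightVal_transfer hF hx hagree (hRW x hx)) (hRV x hx)
    have e2 : (∑ j, lV (signal (w j).1 (w j).2) x) = ∑ i, lV (signal (v i).1 (v i).2) x :=
      leftVal_unique (leftVal_transfer hF hx hagree (hLW x hx)) (hLV x hx)
    simp only [jmp]
    rw [Finset.sum_sub_distrib, Finset.sum_sub_distrib,
      ← Nat.cast_sum, ← Nat.cast_sum, ← Nat.cast_sum, ← Nat.cast_sum, e1, e2]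
  -- alignment of jumps of w (uses proper usc)
  have halign : ∀ x : ℂ, ‖x‖ = 1 →
      (∀ j, 0 ≤ jmp (w j) x) ∨ (∀ j, jmp (w j) x ≤ 0) := by
    intro x hx
    by_contra hcon
    push_neg at hcon
    obtain ⟨⟨j1, hj1⟩, ⟨j2, hj2⟩⟩ := hcon
    have hM : ∀ j : Fin m, rV (signal (w j).1 (w j).2) x ≤ signal (w j).1 (w j).2 x
        ∧ lV (signal (w j).1 (w j).2) x ≤ signal (w j).1 (w j).2 x
        ∧ rV (signal (w j).1 (w j).2) x ≤ 1 ∧ lV (signal (w j).1 (w j).2) x ≤ 1 := by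
      intro j
      obtain ⟨_, _, a1, a2, a3, a4, _⟩ := jmp_master (w j) (hrw j) hx
      exact ⟨a1, a2, a3, a4⟩
    have hs1 : rV (signal (w j1).1 (w j1).2) x < signal (w j1).1 (w j1).2 x := by
      have h1 : rV (signal (w j1).1 (w j1).2) x < lV (signal (w j1).1 (w j1).2) x := by
        have := hj1; rw [jmp] at this; exact_mod_cast by omega
      have := (hM j1).2.1
      omega
    have hs2 : lV (signal (w j2).1 (w j2).2) x < signal (w j2).1 (w j2).2 x := by
      have h1 : lV (signal (w j2).1 (w j2).2) x < rV (signal (w j2).1 (w j2).2) x := by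
        have := hj2; rw [jmp] at this; exact_mod_cast by omega
      have := (hM j2).1
      omega
    have hsum1 : (∑ j, rV (signal (w j).1 (w j).2) x) < ∑ j, signal (w j).1 (w j).2 x :=
      Finset.sum_lt_sum (fun j _ => (hM j).1) ⟨j1, Finset.mem_univ j1, hs1⟩
    have hsum2 : (∑ j, lV (signal (w j).1 (w j).2) x) < ∑ j, signal (w j).1 (w j).2 x :=
      Finset.sum_lt_sum (fun j _ => (hM j).2.1) ⟨j2, Finset.mem_univ j2, hs2⟩
    obtain ⟨a, b, hra, hlb, hmax⟩ := husc x hx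
    have ha : a = ∑ j, rV (signal (w j).1 (w j).2) x := rightVal_unique hra (hRW x hx)
    have hb : b = ∑ j, lV (signal (w j).1 (w j).2) x := leftVal_unique hlb (hLW x hx)
    have hHx : Hsum w x = ∑ j, signal (w j).1 (w j).2 x := rfl
    rw [ha, hb, hHx] at hmax
    have := max_lt hsum1 hsum2
    omega
  have habsW : ∀ x : ℂ, ‖x‖ = 1 →
      |∑ j, jmp (w j) x| = ∑ j, |jmp (w j) x| := by
    intro x hx
    rcases halign x hx with h | h
    · rw [abs_of_nonneg (Finset.sum_nonneg (fun j _ => h j))]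
      exact Finset.sum_congr rfl (fun j _ => (abs_of_nonneg (h j)).symm)
    · rw [abs_of_nonpos (Finset.sum_nonpos (fun j _ => h j)), ← Finset.sum_neg_distrib]
      exact Finset.sum_congr rfl (fun j _ => (abs_of_nonpos (h j)).symm)
  -- the finite set of boundary points
  have htrfinW : ∀ j : Fin m, (bTrace (w j).1 (w j).2).Finite := fun j =>
    trace_finite (hcard j)
  have htrfinV : ∀ i : Fin n,
      ((if (v i).1 = 0 then (∅ : Set ℂ) else bTrace (v i).1 (v i).2)).Finite := by
    intro i
    split_ifs with h
    · exact Set.finite_empty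
    · obtain ⟨p, q, hpq⟩ := trace_subset_pair h (v i).2
      exact Set.Finite.subset ((Set.finite_singleton q).insert p) hpq
  have hTfin : ((⋃ j : Fin m, bTrace (w j).1 (w j).2) ∪
      (⋃ i : Fin n, if (v i).1 = 0 then (∅ : Set ℂ) else bTrace (v i).1 (v i).2)).Finite :=
    (Set.finite_iUnion htrfinW).union (Set.finite_iUnion htrfinV)
  set T := hTfin.toFinset with hTdef
  have hT1 : ∀ x ∈ T, ‖x‖ = 1 := by
    intro x hxT
    rw [hTdef, Set.Finite.mem_toFinset] at hxT
    rcases hxT with h | h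
    · obtain ⟨j, hj⟩ := Set.mem_iUnion.mp h
      exact hj.1
    · obtain ⟨i, hi⟩ := Set.mem_iUnion.mp h
      by_cases h0 : (v i).1 = 0
      · rw [if_pos h0] at hi; exact absurd hi (Set.notMem_empty x)
      · rw [if_neg h0] at hi; exact hi.1
  -- per-disk sums for w
  have hWsum : ∀ j ∈ NW, (∑ x ∈ T, |jmp (w j) x|) = 2 := by
    intro j hj
    have hnb : ¬ PW j := (Finset.mem_filter.mp hj).2
    have h2 : (bTrace (w j).1 (w j).2).ncard = 2 :=
      nonbase_two (hrw j) (hmeet j) hnb (hcard j)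
    obtain ⟨x1, x2, hne, htr⟩ := Set.ncard_eq_two.mp h2
    have hmem : ∀ y, y ∈ bTrace (w j).1 (w j).2 → y ∈ T := by
      intro y hy
      rw [hTdef, Set.Finite.mem_toFinset]
      exact Set.mem_union_left _ (Set.mem_iUnion.mpr ⟨j, hy⟩)
    have hx1T : x1 ∈ T := hmem x1 (by rw [htr]; exact Set.mem_insert _ _)
    have hx2T : x2 ∈ T := hmem x2 (by rw [htr]; exact Set.mem_insert_of_mem _ rfl)
    have hval : ∀ y ∈ bTrace (w j).1 (w j).2, |jmp (w j) y| = 1 := by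
      intro y hy
      have hy1 : ‖y‖ = 1 := hy.1
      have him := trace_tangent h2 hy
      obtain ⟨_, _, _, _, _, _, _, _, c9, c10⟩ := jmp_master (w j) (hrw j) hy1
      rcases lt_or_gt_of_ne him with h | h
      · rw [(c9 hy h).1]; rfl
      · rw [(c10 hy h).1]; rfl
    have hzero : ∀ x ∈ T, x ∉ ({x1, x2} : Finset ℂ) → |jmp (w j) x| = 0 := by
      intro x hxT hxp
      have hnt : x ∉ bTrace (w j).1 (w j).2 := by
        rw [htr]
        intro hc
        rcases hc with hc | hc
        · exact hxp (by rw [hc]; exact Finset.mem_insert_self _ _)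
        · exact hxp (by rw [hc]; exact Finset.mem_insert_of_mem (Finset.mem_singleton_self _))
      rw [(jmp_master (w j) (hrw j) (hT1 x hxT)).2.2.2.2.2.2.1 hnt]
      rfl
    have hsub : ({x1, x2} : Finset ℂ) ⊆ T := by
      intro y hy
      rcases Finset.mem_insert.mp hy with h | h
      · rw [h]; exact hx1T
      · rw [Finset.mem_singleton.mp h]; exact hx2T
    rw [← Finset.sum_subset hsub (fun x hxT hxn => hzero x hxT hxn), Finset.sum_pair hne,
      hval x1 (by rw [htr]; exact Set.mem_insert _ _),
      hval x2 (by rw [htr]; exact Set.mem_insert_of_mem _ rfl)]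
    norm_num
  -- per-disk bounds for v
  have hVbound : ∀ i : Fin n, (∑ x ∈ T, |jmp (v i) x|) ≤ 2 := by
    intro i
    by_cases h0 : (v i).1 = 0
    · have hz : ∀ x ∈ T, |jmp (v i) x| = 0 := by
        intro x hxT
        have him : ((starRingEnd ℂ) (v i).1 * x).im = 0 := by rw [h0]; simp
        rw [(jmp_master (v i) (hrv i) (hT1 x hxT)).2.2.2.2.2.2.2.1 him]
        rfl
      rw [Finset.sum_congr rfl hz]
      simp
    · obtain ⟨p, q, hpq⟩ := trace_subset_pair h0 (v i).2
      have hfil : (∑ x ∈ T, |jmp (v i) x|)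
          = ∑ x ∈ T.filter (fun x => x ∈ ({p, q} : Finset ℂ)), |jmp (v i) x| := by
        refine (Finset.sum_filter_of_ne ?_).symm
        intro x hxT hne
        have hnt : x ∈ bTrace (v i).1 (v i).2 := by
          by_contra hc
          exact hne (by
            rw [(jmp_master (v i) (hrv i) (hT1 x hxT)).2.2.2.2.2.2.1 hc]; rfl)
        have := hpq hnt
        rcases this with h | h
        · rw [h]; exact Finset.mem_insert_self _ _
        · rw [h]; exact Finset.mem_insert_of_mem (Finset.mem_singleton_self _)
      rw [hfil]
      calc (∑ x ∈ T.filter (fun x => x ∈ ({p, q} : Finset ℂ)), |jmp (v i) x|)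
          ≤ ∑ _x ∈ T.filter (fun x => x ∈ ({p, q} : Finset ℂ)), (1:ℤ) :=
            Finset.sum_le_sum (fun x hx =>
              jmp_abs_le_one (v i) (hrv i) (hT1 x (Finset.mem_filter.mp hx).1))
        _ = (T.filter (fun x => x ∈ ({p, q} : Finset ℂ))).card := by simp
        _ ≤ (({p, q} : Finset ℂ)).card := by
            exact_mod_cast Finset.card_le_card (fun x hx => (Finset.mem_filter.mp hx).2)
        _ ≤ 2 := by
            exact_mod_cast le_trans (Finset.card_insert_le _ _) (by simp)
  -- base disks have zero jump
  have hbaseW : ∀ j : Fin m, PW j → ∀ x ∈ T, |jmp (w j) x| = 0 := by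
    intro j hj x hxT
    have := base_jmp_zero hj (hT1 x hxT)
    rw [Prod.mk.eta] at this
    rw [this]
    rfl
  have hbaseV : ∀ i : Fin n, PV i → ∀ x ∈ T, |jmp (v i) x| = 0 := by
    intro i hi x hxT
    have := base_jmp_zero hi (hT1 x hxT)
    rw [Prod.mk.eta] at this
    rw [this]
    rfl
  -- the chain of (in)equalities
  have hchain : (2 * NW.card : ℤ) ≤ 2 * NV.card := by
    calc (2 * NW.card : ℤ) = ∑ _j ∈ NW, (2:ℤ) := by
          rw [Finset.sum_const, nsmul_eq_mul, mul_comm]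
      _ = ∑ j ∈ NW, ∑ x ∈ T, |jmp (w j) x| := Finset.sum_congr rfl
            (fun j hj => (hWsum j hj).symm)
      _ = ∑ x ∈ T, ∑ j ∈ NW, |jmp (w j) x| := Finset.sum_comm
      _ = ∑ x ∈ T, ∑ j : Fin m, |jmp (w j) x| := by
          refine Finset.sum_congr rfl (fun x hxT => ?_)
          refine Finset.sum_subset (Finset.subset_univ NW) (fun j _ hjn => ?_)
          have hP : PW j := by
            by_contra hc
            exact hjn (Finset.mem_filter.mpr ⟨Finset.mem_univ j, hc⟩)
          exact hbaseW j hP x hxT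
      _ = ∑ x ∈ T, |∑ j : Fin m, jmp (w j) x| := Finset.sum_congr rfl
            (fun x hxT => (habsW x (hT1 x hxT)).symm)
      _ = ∑ x ∈ T, |∑ i : Fin n, jmp (v i) x| := Finset.sum_congr rfl
            (fun x hxT => by rw [hJ x (hT1 x hxT)])
      _ ≤ ∑ x ∈ T, ∑ i : Fin n, |jmp (v i) x| :=
            Finset.sum_le_sum (fun x _ => Finset.abs_sum_le_sum_abs _ _)
      _ = ∑ i : Fin n, ∑ x ∈ T, |jmp (v i) x| := Finset.sum_comm
      _ = ∑ i ∈ NV, ∑ x ∈ T, |jmp (v i) x| := by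
          refine (Finset.sum_subset (Finset.subset_univ NV) (fun i _ hin => ?_)).symm
          have hP : PV i := by
            by_contra hc
            exact hin (Finset.mem_filter.mpr ⟨Finset.mem_univ i, hc⟩)
          exact Finset.sum_eq_zero (fun x hxT => hbaseV i hP x hxT)
      _ ≤ ∑ _i ∈ NV, (2:ℤ) := Finset.sum_le_sum (fun i _ => hVbound i)
      _ = 2 * NV.card := by rw [Finset.sum_const, nsmul_eq_mul, mul_comm]
  have hNcard : NW.card ≤ NV.card := by exact_mod_cast by linarith
  have hmW : BW.card + NW.card = m := by
    rw [hBW, hNW, Finset.card_filter_add_card_filter_not, Finset.card_univ,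
      Fintype.card_fin]
  have hnV : BV.card + NV.card = n := by
    rw [hBV, hNVd, Finset.card_filter_add_card_filter_not, Finset.card_univ,
      Fintype.card_fin]
  omega
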